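/- Let N_e be a positive natural number, let X₁, …, X_{N_e} : ℝ³ → ℂ, let T : ℝ³ → ℝ³ be a map, let Δ ≠ 0 be a real number, and let c : ℝ³ → ℂ satisfy |c(u)| = 1 for all u; define X̂ᵢ(u) = c(u)·Xᵢ(T u)/|Δ|. Let α, β, γ be real parameters with α > 0, β ≥ 0, γ ≥ 0, and with average spectrum M_x(u) = (1/N_e)·Σᵢ Xᵢ(u), average power spectral density D_x(u) = (1/N_e)·Σᵢ |Xᵢ(u)|², and average similarity S_x(u) = (1/N_e)·Σᵢ |Xᵢ(u) − M_x(u)|², define the MACH filter h(u) = M_x(u)/(α + β·D_x(u) + γ·S_x(u)). Let M̂_x, D̂_x, Ŝ_x be the corresponding quantities built from the X̂ᵢ, and define ĥ(u) = M̂_x(u)/(α̂ + β̂·D̂_x(u) + γ̂·Ŝ_x(u)) with parameters α̂ = α/|Δ|², β̂ = β, γ̂ = γ (note α̂ > 0, so both denominators are strictly positive). Then for every u ∈ ℝ³, ĥ(u) = |Δ| · c(u) · h(T u). -/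

import Mathlib

theorem stmt_10 (Ne : ℕ) (hNe : 0 < Ne)
    (X : Fin Ne → EuclideanSpace ℝ (Fin 3) → ℂ)
    (T : EuclideanSpace ℝ (Fin 3) → EuclideanSpace ℝ (Fin 3))
    (Δ : ℝ) (hΔ : Δ ≠ 0)
    (c : EuclideanSpace ℝ (Fin 3) → ℂ) (hc : ∀ u, ‖c u‖ = 1)
    (Xhat : Fin Ne → EuclideanSpace ℝ (Fin 3) → ℂ)
    (hXhat : ∀ i u, Xhat i u = c u * X i (T u) / ((|Δ| : ℝ) : ℂ))
    (α β γ : ℝ) (hα : 0 < α) (hβ : 0 ≤ β) (hγ : 0 ≤ γ)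
    (Mx Mxhat : EuclideanSpace ℝ (Fin 3) → ℂ)
    (hMx : ∀ u, Mx u = (1 / (Ne : ℂ)) * ∑ i, X i u)
    (hMxhat : ∀ u, Mxhat u = (1 / (Ne : ℂ)) * ∑ i, Xhat i u)
    (Dx Dxhat : EuclideanSpace ℝ (Fin 3) → ℝ)
    (hDx : ∀ u, Dx u = (1 / (Ne : ℝ)) * ∑ i, ‖X i u‖ ^ 2)
    (hDxhat : ∀ u, Dxhat u = (1 / (Ne : ℝ)) * ∑ i, ‖Xhat i u‖ ^ 2)
    (Sx Sxhat : EuclideanSpace ℝ (Fin 3) → ℝ)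
    (hSx : ∀ u, Sx u = (1 / (Ne : ℝ)) * ∑ i, ‖X i u - Mx u‖ ^ 2)
    (hSxhat : ∀ u, Sxhat u = (1 / (Ne : ℝ)) * ∑ i, ‖Xhat i u - Mxhat u‖ ^ 2)
    (h hhat : EuclideanSpace ℝ (Fin 3) → ℂ)
    (hh : ∀ u, h u = Mx u / ((α + β * Dx u + γ * Sx u : ℝ) : ℂ))
    (αhat βhat γhat : ℝ)
    (hαhat : αhat = α / |Δ| ^ 2) (hβhat : βhat = β) (hγhat : γhat = γ)
    (hhhat : ∀ u, hhat u = Mxhat u / ((αhat + βhat * Dxhat u + γhat * Sxhat u : ℝ) : ℂ)) :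
    ∀ u, hhat u = ((|Δ| : ℝ) : ℂ) * c u * h (T u) := by
  intro u
  set v := T u with hv
  have hd : (0:ℝ) < |Δ| := abs_pos.mpr hΔ
  have hd' : ((|Δ| : ℝ) : ℂ) ≠ 0 := by exact_mod_cast hd.ne'
  have hM : Mxhat u = c u * Mx v / ((|Δ| : ℝ) : ℂ) := by
    rw [hMxhat, hMx]
    simp only [hXhat]
    rw [← Finset.sum_div, ← Finset.mul_sum]
    ring
  have habs : ∀ i, ‖Xhat i u‖ = ‖X i v‖ / |Δ| := by
    intro i
    rw [hXhat, norm_div, norm_mul, hc]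
    simp [abs_of_pos hd, hv]
  have hD : Dxhat u = Dx v / |Δ| ^ 2 := by
    rw [hDxhat, hDx]
    simp only [habs, div_pow]
    rw [← Finset.sum_div]
    ring
  have habs2 : ∀ i, ‖Xhat i u - Mxhat u‖
      = ‖X i v - Mx v‖ / |Δ| := by
    intro i
    rw [hXhat, hM]
    have e : c u * X i v / ((|Δ| : ℝ) : ℂ) - c u * Mx v / ((|Δ| : ℝ) : ℂ)
        = c u * (X i v - Mx v) / ((|Δ| : ℝ) : ℂ) := by ring
    rw [e, norm_div, norm_mul, hc]
    simp [abs_of_pos hd]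
  have hS : Sxhat u = Sx v / |Δ| ^ 2 := by
    rw [hSxhat, hSx]
    simp only [habs2, div_pow]
    rw [← Finset.sum_div]
    ring
  have hDx0 : 0 ≤ Dx v := by
    rw [hDx]
    positivity
  have hSx0 : 0 ≤ Sx v := by
    rw [hSx]
    positivity
  have hpos : 0 < α + β * Dx v + γ * Sx v := by positivity
  have hden : αhat + βhat * Dxhat u + γhat * Sxhat u
      = (α + β * Dx v + γ * Sx v) / |Δ| ^ 2 := by
    rw [hαhat, hβhat, hγhat, hD, hS]
    ring
  have hposC : ((α + β * Dx v + γ * Sx v : ℝ) : ℂ) ≠ 0 := by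
    exact_mod_cast hpos.ne'
  rw [hhhat, hh, hM, hden]
  have e : (((α + β * Dx v + γ * Sx v) / |Δ| ^ 2 : ℝ) : ℂ)
      = ((α + β * Dx v + γ * Sx v : ℝ) : ℂ) / ((|Δ| : ℝ) : ℂ) ^ 2 := by
    push_cast
    ring
  rw [e, div_div_div_comm]
  have e3 : ((|Δ| : ℝ) : ℂ) / ((|Δ| : ℝ) : ℂ) ^ 2 = 1 / ((|Δ| : ℝ) : ℂ) := by
    rw [sq]
    field_simp
  rw [e3, div_div_eq_mul_div, div_one, mul_comm]
  ring
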